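/- Let u, v be coprime integers with 2*z^5 = u^3 - v^3 for some integer z not divisible by 3, with u, v odd. Then there exist coprime integers a, b with z = a*b, u - v = 2*a^5, and u^2 + u*v + v^2 = b^5. -/

import Mathlib

theorem fifth_power_extraction (u v z : ℤ) (huv : IsCoprime u v) (hu : Odd u) (hv : Odd v)
    (hz3 : ¬ (3 : ℤ) ∣ z) (heq : 2 * z ^ 5 = u ^ 3 - v ^ 3) :
    ∃ a b : ℤ, IsCoprime a b ∧ z = a * b ∧ u - v = 2 * a ^ 5 ∧
      u ^ 2 + u * v + v ^ 2 = b ^ 5 := by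
  -- u - v is even
  obtain ⟨d, hd⟩ : ∃ d, u - v = 2 * d := by
    obtain ⟨m, hm⟩ := hu; obtain ⟨n, hn⟩ := hv
    exact ⟨m - n, by omega⟩
  set s : ℤ := u ^ 2 + u * v + v ^ 2 with hs
  have hkey : z ^ 5 = d * s := by
    have : u ^ 3 - v ^ 3 = (u - v) * s := by ring
    rw [this, hd] at heq
    linarith
  -- 3 does not divide z^5
  have hz35 : ¬ (3 : ℤ) ∣ z ^ 5 := fun h =>
    hz3 (Int.Prime.dvd_pow' (by norm_num) h)
  -- coprimality of d and s
  have hcop : IsCoprime d s := by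
    rw [Int.isCoprime_iff_gcd_eq_one]
    by_contra hg
    obtain ⟨p, hp, hpd⟩ := Nat.exists_prime_and_dvd hg
    have hpc : (p : ℤ) ∣ (Int.gcd d s : ℤ) := Int.natCast_dvd_natCast.mpr hpd
    have hpd' : (p : ℤ) ∣ d := hpc.trans (Int.gcd_dvd_left d s)
    have hps' : (p : ℤ) ∣ s := hpc.trans (Int.gcd_dvd_right d s)
    have hpp : Prime (p : ℤ) := Nat.prime_iff_prime_int.mp hp
    have hpuv : (p : ℤ) ∣ u - v := hd ▸ Dvd.dvd.mul_left hpd' 2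
    have h3uv : (p : ℤ) ∣ 3 * (u * v) := by
      have : 3 * (u * v) = s - (u - v) ^ 2 := by ring
      rw [this]; exact dvd_sub hps' (dvd_pow hpuv two_ne_zero)
    rcases hpp.dvd_mul.mp h3uv with h3 | huvp
    · -- p = 3, so 3 ∣ d ∣ z^5
      have hp3 : p = 3 := (Nat.prime_dvd_prime_iff_eq hp (by norm_num)).mp
        (by exact_mod_cast h3)
      subst hp3
      exact hz35 (by exact_mod_cast (hkey ▸ hpd'.mul_right s))
    · rcases hpp.dvd_mul.mp huvp with hpu | hpv
      · have hpv : (p : ℤ) ∣ v := by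
          have := dvd_sub hpu hpuv; simpa using this
        exact hpp.not_unit (huv.isUnit_of_dvd' hpu hpv)
      · have hpu : (p : ℤ) ∣ u := by
          have := dvd_add hpv hpuv; simpa using this
        exact hpp.not_unit (huv.isUnit_of_dvd' hpu hpv)
  have hmul : d * s = z ^ 5 := hkey.symm
  obtain ⟨a, ha⟩ := Int.eq_pow_of_mul_eq_pow_odd_left hcop (by decide) hmul
  obtain ⟨b, hb⟩ := Int.eq_pow_of_mul_eq_pow_odd_right hcop (by decide) hmul
  refine ⟨a, b, ?_, ?_, ?_, hb⟩
  · have : IsCoprime (a ^ 5) (b ^ 5) := ha ▸ hb ▸ hcop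
    exact ((IsCoprime.pow_left_iff (by norm_num)).mp
      ((IsCoprime.pow_right_iff (by norm_num)).mp this))
  · have h5 : z ^ 5 = (a * b) ^ 5 := by rw [hkey, ha, hb]; ring
    exact (Odd.strictMono_pow (R := ℤ) (by decide)).injective h5
  · rw [hd, ha]
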